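/- The set of commutators {XY - YX : X, Y ∈ UT_n} is exactly the set UT_n^{(0)} of strictly upper triangular matrices. -/
import Mathlib


open Matrix

section Aux

variable {K : Type*} [Field K] {n : ℕ}

/-- Extension of a matrix to ℕ-indexed entries, zero outside. -/
def Mext (M : Matrix (Fin n) (Fin n) K) : ℕ → ℕ → K :=
  fun i j => if h : i < n ∧ j < n then M ⟨i, h.1⟩ ⟨j, h.2⟩ else 0

/-- The solution matrix `Y` to `[shift, Y] = M`, as a ℕ-indexed family. -/
def Yext (M : Matrix (Fin n) (Fin n) K) : ℕ → ℕ → K :=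
  fun a b => ∑ t ∈ Finset.range a, if t ≤ b then Mext M (a - 1 - t) (b - t) else 0

lemma Mext_zero (M : Matrix (Fin n) (Fin n) K)
    (hM : ∀ a b : Fin n, b ≤ a → M a b = 0) {i j : ℕ} (hij : j ≤ i) :
    Mext M i j = 0 := by
  unfold Mext
  split
  · exact hM _ _ (Fin.mk_le_mk.mpr hij)
  · rfl

lemma Mext_eq (M : Matrix (Fin n) (Fin n) K) (a b : Fin n) :
    Mext M (a : ℕ) (b : ℕ) = M a b := by
  simp [Mext, a.isLt, b.isLt]

lemma Yext_zero (M : Matrix (Fin n) (Fin n) K)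
    (hM : ∀ a b : Fin n, b ≤ a → M a b = 0) {a b : ℕ} (h : b < a) :
    Yext M a b = 0 := by
  unfold Yext
  apply Finset.sum_eq_zero
  intro t ht
  rw [Finset.mem_range] at ht
  split
  · exact Mext_zero M hM (by omega)
  · rfl

lemma Yext_rec (M : Matrix (Fin n) (Fin n) K) (a b : ℕ) :
    Yext M (a + 1) b = Mext M a b + (if b = 0 then 0 else Yext M a (b - 1)) := by
  unfold Yext
  rw [Finset.sum_range_succ']
  have h0 : (if 0 ≤ b then Mext M (a + 1 - 1 - 0) (b - 0) else 0) = Mext M a b := by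
    simp
  rw [h0, add_comm]
  congr 1
  by_cases hb : b = 0
  · rw [if_pos hb]
    apply Finset.sum_eq_zero
    intro t _
    rw [if_neg (by omega)]
  · rw [if_neg hb]
    refine Finset.sum_congr rfl fun t ht => ?_
    have h1 : a + 1 - 1 - (t + 1) = a - 1 - t := by omega
    have h2 : b - (t + 1) = b - 1 - t := by omega
    have h3 : (t + 1 ≤ b) ↔ (t ≤ b - 1) := by omega
    rw [h1, h2]
    exact if_congr h3 rfl rfl

lemma stmt10_exists_comm (M : Matrix (Fin n) (Fin n) K)
    (hM : ∀ a b : Fin n, b ≤ a → M a b = 0) :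
    ∃ X Y : Matrix (Fin n) (Fin n) K,
      (∀ a b : Fin n, b < a → X a b = 0) ∧ (∀ a b : Fin n, b < a → Y a b = 0) ∧
      M = X * Y - Y * X := by
  classical
  set X : Matrix (Fin n) (Fin n) K :=
    Matrix.of fun a b => if (b : ℕ) = (a : ℕ) + 1 then (1 : K) else 0 with hXdef
  set Y : Matrix (Fin n) (Fin n) K :=
    Matrix.of fun a b => Yext M a b with hYdef
  have hxy : ∀ a b : Fin n, (X * Y) a b = Yext M ((a : ℕ) + 1) (b : ℕ) := by
    intro a b
    rw [Matrix.mul_apply]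
    by_cases h : (a : ℕ) + 1 < n
    · rw [Finset.sum_eq_single (⟨(a : ℕ) + 1, h⟩ : Fin n)]
      · simp [hXdef, hYdef]
      · intro k _ hk
        have hk' : ¬ ((k : ℕ) = (a : ℕ) + 1) := fun hc => hk (Fin.ext hc)
        simp [hXdef, hk']
      · intro h'
        exact absurd (Finset.mem_univ _) h'
    · have ha := a.isLt
      have hb := b.isLt
      have hn' : (a : ℕ) + 1 = n := by omega
      rw [Yext_zero M hM (by omega : (b : ℕ) < (a : ℕ) + 1)]
      apply Finset.sum_eq_zero
      intro k _
      have hk' : ¬ ((k : ℕ) = (a : ℕ) + 1) := by have := k.isLt; omega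
      simp [hXdef, hk']
  have hyx : ∀ a b : Fin n,
      (Y * X) a b = (if (b : ℕ) = 0 then 0 else Yext M (a : ℕ) ((b : ℕ) - 1)) := by
    intro a b
    rw [Matrix.mul_apply]
    by_cases hb : (b : ℕ) = 0
    · rw [if_pos hb]
      apply Finset.sum_eq_zero
      intro k _
      have : ¬ ((b : ℕ) = (k : ℕ) + 1) := by omega
      simp [hXdef, this]
    · rw [if_neg hb]
      have hb1 : (b : ℕ) - 1 < n := by have := b.isLt; omega
      rw [Finset.sum_eq_single (⟨(b : ℕ) - 1, hb1⟩ : Fin n)]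
      · simp only [hXdef, hYdef, Matrix.of_apply]
        rw [if_pos (by omega : (b : ℕ) = ((b : ℕ) - 1) + 1), mul_one]
      · intro k _ hk
        have hk' : ¬ ((b : ℕ) = (k : ℕ) + 1) := by
          intro hc
          apply hk
          apply Fin.ext
          simp
          omega
        simp [hXdef, hk']
      · intro h'
        exact absurd (Finset.mem_univ _) h'
  refine ⟨X, Y, ?_, ?_, ?_⟩
  · intro a b hab
    have : ¬ ((b : ℕ) = (a : ℕ) + 1) := by
      have := (Fin.lt_def.mp hab); omega
    simp [hXdef, this]
  · intro a b hab
    have := Fin.lt_def.mp hab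
    simp only [hYdef, Matrix.of_apply]
    exact Yext_zero M hM this
  · ext a b
    rw [Matrix.sub_apply, hxy a b, hyx a b, Yext_rec M (a : ℕ) (b : ℕ),
      add_sub_cancel_right, Mext_eq]

end Aux

/-- The set of commutators `XY - YX` of upper triangular matrices is
exactly the set of strictly upper triangular matrices. -/
theorem stmt10 {K : Type*} [Field K] {n : ℕ} (hn : 2 ≤ n) :
    {M : Matrix (Fin n) (Fin n) K | ∃ X Y : Matrix (Fin n) (Fin n) K,
        (∀ a b : Fin n, b < a → X a b = 0) ∧ (∀ a b : Fin n, b < a → Y a b = 0) ∧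
        M = X * Y - Y * X}
      = {M : Matrix (Fin n) (Fin n) K | ∀ a b : Fin n, b ≤ a → M a b = 0} := by
  ext M
  simp only [Set.mem_setOf_eq]
  constructor
  · rintro ⟨X, Y, hX, hY, rfl⟩
    intro a b hab
    rw [Matrix.sub_apply, Matrix.mul_apply, Matrix.mul_apply]
    have h1 : ∑ k, X a k * Y k b = X a a * Y a b := by
      apply Finset.sum_eq_single_of_mem a (Finset.mem_univ a)
      intro k _ hk
      rcases lt_or_gt_of_ne hk with h | h
      · rw [hX a k h, zero_mul]
      · rw [hY k b (lt_of_le_of_lt hab h), mul_zero]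
    have h2 : ∑ k, Y a k * X k b = Y a a * X a b := by
      apply Finset.sum_eq_single_of_mem a (Finset.mem_univ a)
      intro k _ hk
      rcases lt_or_gt_of_ne hk with h | h
      · rw [hY a k h, zero_mul]
      · rw [hX k b (lt_of_le_of_lt hab h), mul_zero]
    rw [h1, h2]
    rcases lt_or_eq_of_le hab with h | h
    · rw [hY a b h, hX a b h, mul_zero, mul_zero, sub_zero]
    · subst h
      ring
  · intro hM
    exact stmt10_exists_comm M hM
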